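/- (Theorem 4.3 item 1, polynomial algebra.) With G_k acting on ℂ[x_1, …, x_k] (the coordinate ring of g_k in the basis e_1, …, e_k) by (A·P)(x) = P(Ad(A⁻¹)(x)), the invariant subalgebra ℂ[g_k]^{G_k} is a polynomial algebra: there exist finitely many invariant polynomials f_1, …, f_r that are algebraically independent over ℂ and generate ℂ[g_k]^{G_k} as a ℂ-algebra. -/

import Mathlib

/-- The matrix `M(a)` with `M(a)_{ij} = Σ_{s_1+⋯+s_i = j, s_l ≥ 1} a_{s_1} ⋯ a_{s_i}`. -/
noncomputable def Mmat (k : ℕ) (a : Fin k → ℂ) : Matrix (Fin k) (Fin k) ℂ :=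
  fun i j =>
    ∑ s ∈ (Finset.Nat.antidiagonalTuple (i.val + 1) (j.val + 1)).filter
        (fun s => ∀ l, 0 < s l),
      ∏ l, (if h : 1 ≤ s l ∧ s l ≤ k then a ⟨s l - 1, by omega⟩ else 0)

/-- `G_k = { M(a) : a_1 ≠ 0 }`. -/
noncomputable def Gset (k : ℕ) [NeZero k] : Set (Matrix (Fin k) (Fin k) ℂ) :=
  {A | ∃ a : Fin k → ℂ, a 0 ≠ 0 ∧ A = Mmat k a}

/-- The matrix `e_s` with `(e_s)_{i,j} = i` if `j = i + s - 1` and `0` otherwise;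
`e_1, …, e_k` is a basis of `g_k`. -/
def Emat (k s : ℕ) : Matrix (Fin k) (Fin k) ℂ :=
  fun i j => if (j : ℕ) + 1 = (i : ℕ) + s then ((i : ℕ) + 1 : ℂ) else 0

/-- The element of `g_k` with coordinates `c` in the basis `e_1, …, e_k`. -/
noncomputable def matOf (k : ℕ) (c : Fin k → ℂ) : Matrix (Fin k) (Fin k) ℂ :=
  ∑ s : Fin k, c s • Emat k (s.val + 1)

/-- The coordinates of `x ∈ g_k` in the basis `e_1, …, e_k` (read off the first row,
since `(e_s)_{1,j} = δ_{j,s}`). -/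
def coordOf (k : ℕ) [NeZero k] (x : Matrix (Fin k) (Fin k) ℂ) : Fin k → ℂ :=
  fun s => x 0 s

section Aux
variable (k : ℕ) [NeZero k]
set_option linter.unusedSectionVars false

lemma Mmat_lower (a : Fin k → ℂ) (i j : Fin k) (h : (j : ℕ) < (i : ℕ)) :
    Mmat k a i j = 0 := by
  unfold Mmat
  apply Finset.sum_eq_zero
  intro s hs
  simp only [Finset.mem_filter, Finset.Nat.mem_antidiagonalTuple] at hs
  exfalso
  have h1 : ∀ l ∈ (Finset.univ : Finset (Fin (i.val + 1))), 1 ≤ s l := fun l _ => hs.2 l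
  have h2 := Finset.sum_le_sum h1
  rw [hs.1] at h2
  simp [Finset.card_univ] at h2
  omega

lemma Mmat_filter_diag (i : Fin k) :
    (Finset.Nat.antidiagonalTuple (i.val + 1) (i.val + 1)).filter (fun s => ∀ l, 0 < s l)
      = {fun _ => 1} := by
  ext s
  simp only [Finset.mem_filter, Finset.Nat.mem_antidiagonalTuple, Finset.mem_singleton]
  constructor
  · rintro ⟨hsum, hpos⟩
    funext l
    by_contra hl
    have h2 : 1 < s l := by have := hpos l; omega
    have h1 : ∀ m ∈ (Finset.univ : Finset (Fin (i.val + 1))), 1 ≤ s m := fun m _ => hpos m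
    have := Finset.sum_lt_sum h1 ⟨l, Finset.mem_univ l, h2⟩
    rw [hsum] at this
    simp [Finset.card_univ] at this
  · rintro rfl
    exact ⟨by simp, fun l => one_pos⟩

lemma Mmat_diag (a : Fin k → ℂ) (i : Fin k) : Mmat k a i i = a 0 ^ (i.val + 1) := by
  have hk : 1 ≤ k := Nat.pos_of_ne_zero (NeZero.ne k)
  unfold Mmat
  rw [Mmat_filter_diag k i, Finset.sum_singleton]
  have : ∀ l : Fin (i.val + 1),
      (if h : 1 ≤ (fun _ : Fin (i.val+1) => 1) l ∧ (fun _ : Fin (i.val+1) => 1) l ≤ k then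
        a ⟨(fun _ : Fin (i.val+1) => 1) l - 1, by omega⟩ else 0) = a 0 := by
    intro l
    rw [dif_pos ⟨le_refl 1, hk⟩]
    congr 1
  rw [Finset.prod_congr rfl (fun l _ => this l)]
  simp [Finset.card_univ]

lemma Mmat_scale (lam : ℂ) :
    Mmat k (fun s => if s = 0 then lam else 0)
      = Matrix.diagonal (fun i : Fin k => lam ^ (i.val + 1)) := by
  funext i j
  by_cases hij : i = j
  · subst hij
    rw [Mmat_diag, Matrix.diagonal_apply_eq]
    simp
  · rw [Matrix.diagonal_apply_ne _ hij]
    unfold Mmat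
    apply Finset.sum_eq_zero
    intro s hs
    simp only [Finset.mem_filter, Finset.Nat.mem_antidiagonalTuple] at hs
    by_cases hall : ∀ l, s l = 1
    · exfalso
      have hsum : ∑ l, s l = i.val + 1 := by
        rw [Finset.sum_congr rfl (fun l _ => hall l)]
        simp [Finset.card_univ]
      have hj := hs.1
      exact hij (Fin.ext (by omega))
    · push_neg at hall
      obtain ⟨l, hl⟩ := hall
      apply Finset.prod_eq_zero (Finset.mem_univ l)
      have h2 : 2 ≤ s l := by have := hs.2 l; omega
      by_cases hb : 1 ≤ s l ∧ s l ≤ k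
      · rw [dif_pos hb]
        have hne : (⟨s l - 1, by omega⟩ : Fin k) ≠ 0 := by
          intro h
          have := congrArg Fin.val h
          simp at this
          omega
        simp [hne]
      · rw [dif_neg hb]

lemma matOf_row0 (c : Fin k → ℂ) (j : Fin k) : matOf k c 0 j = c j := by
  unfold matOf
  rw [Matrix.sum_apply]
  rw [Finset.sum_eq_single j]
  · rw [Matrix.smul_apply]
    unfold Emat
    rw [if_pos (by simp)]
    simp
  · intro s _ hs
    rw [Matrix.smul_apply]
    unfold Emat
    rw [if_neg ?_, smul_zero]
    simp only [Fin.val_zero, zero_add]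
    intro h
    exact hs (Fin.ext (by omega))
  · simp

lemma matOf_col0 (c : Fin k → ℂ) (i : Fin k) (hi : i ≠ 0) : matOf k c i 0 = 0 := by
  unfold matOf
  rw [Matrix.sum_apply]
  apply Finset.sum_eq_zero
  intro s _
  have hiv : (i : ℕ) ≠ 0 := fun h => hi (Fin.ext h)
  rw [Matrix.smul_apply]
  unfold Emat
  rw [if_neg ?_, smul_zero]
  simp only [Fin.val_zero, zero_add]
  omega

lemma Mmat_det_ne (a : Fin k → ℂ) (ha : a 0 ≠ 0) : (Mmat k a).det ≠ 0 := by
  rw [Matrix.det_of_upperTriangular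
      (by intro i j h; exact Mmat_lower k a i j h)]
  rw [Finset.prod_ne_zero_iff]
  intro i _
  rw [Mmat_diag]
  exact pow_ne_zero _ ha

lemma conj_00 (A : Matrix (Fin k) (Fin k) ℂ) (hA : A ∈ Gset k) (c : Fin k → ℂ) :
    (A⁻¹ * matOf k c * A) 0 0 = c 0 := by
  obtain ⟨a, ha, rfl⟩ := hA
  set A := Mmat k a with hAdef
  have hcol : ∀ m : Fin k, m ≠ 0 → A m 0 = 0 := by
    intro m hm
    apply Mmat_lower
    have : (m : ℕ) ≠ 0 := fun h => hm (Fin.ext h)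
    simp
    have h0 : ((0 : Fin k) : ℕ) = 0 := Nat.zero_mod k
    omega
  have hAinv : A⁻¹ * A = 1 :=
    Matrix.nonsing_inv_mul A (isUnit_iff_ne_zero.mpr (Mmat_det_ne k a ha))
  have h1 : A⁻¹ 0 0 * A 0 0 = 1 := by
    have h := congrArg (fun M => M 0 0) hAinv
    simp only [Matrix.mul_apply] at h
    rw [Finset.sum_eq_single 0] at h
    · simpa using h
    · intro m _ hm; rw [hcol m hm, mul_zero]
    · simp
  have hxA : ∀ l, (matOf k c * A) l 0 = matOf k c l 0 * A 0 0 := by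
    intro l
    rw [Matrix.mul_apply, Finset.sum_eq_single 0]
    · intro m _ hm; rw [hcol m hm, mul_zero]
    · simp
  rw [Matrix.mul_assoc, Matrix.mul_apply, Finset.sum_eq_single 0]
  · rw [hxA 0, matOf_row0]
    rw [mul_comm (c 0), ← mul_assoc, h1, one_mul]
  · intro l _ hl
    rw [hxA l, matOf_col0 k c l hl, zero_mul, mul_zero]
  · simp

lemma scale_coord (lam : ℂ) (hl : lam ≠ 0) (c : Fin k → ℂ) (s : Fin k) :
    coordOf k ((Mmat k (fun t => if t = 0 then lam else 0))⁻¹ * matOf k c *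
      Mmat k (fun t => if t = 0 then lam else 0)) s = lam ^ (s.val) * c s := by
  have hDinv : (Matrix.diagonal (fun i : Fin k => lam ^ (i.val + 1)))⁻¹
      = Matrix.diagonal (fun i : Fin k => (lam ^ (i.val + 1))⁻¹) := by
    apply Matrix.inv_eq_left_inv
    rw [Matrix.diagonal_mul_diagonal]
    rw [show (fun i : Fin k => (lam ^ (i.val + 1))⁻¹ * lam ^ (i.val + 1))
        = fun _ : Fin k => (1 : ℂ) from funext fun i => inv_mul_cancel₀ (pow_ne_zero _ hl)]
    exact Matrix.diagonal_one
  rw [Mmat_scale, hDinv]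
  unfold coordOf
  rw [Matrix.mul_diagonal, Matrix.diagonal_mul, matOf_row0]
  simp only [Fin.val_zero, pow_one]
  rw [pow_succ]
  field_simp
  ring

end Aux

/-- `ℂ[g_k]^{G_k}` is a polynomial algebra: there are finitely many invariant
polynomials `f_1, …, f_r`, algebraically independent over `ℂ`, which generate the
invariant algebra of the adjoint action `(A·P)(x) = P(A⁻¹ x A)`. -/
theorem invariant_ring_adjoint_polynomial_algebra (k : ℕ) [NeZero k] :
    ∃ (r : ℕ) (f : Fin r → MvPolynomial (Fin k) ℂ),
      AlgebraicIndependent ℂ f ∧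
      (∀ i : Fin r, ∀ A ∈ Gset k, ∀ c : Fin k → ℂ,
          MvPolynomial.eval (coordOf k (A⁻¹ * matOf k c * A)) (f i)
            = MvPolynomial.eval c (f i)) ∧
      (∀ P : MvPolynomial (Fin k) ℂ,
          (∀ A ∈ Gset k, ∀ c : Fin k → ℂ,
              MvPolynomial.eval (coordOf k (A⁻¹ * matOf k c * A)) P
                = MvPolynomial.eval c P) →
          P ∈ Algebra.adjoin ℂ (Set.range f)) := by
  refine ⟨1, fun _ => MvPolynomial.X 0, ?_, ?_, ?_⟩
  · exact (MvPolynomial.algebraicIndependent_X (Fin k) ℂ).comp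
      (fun _ : Fin 1 => (0 : Fin k)) (Function.injective_of_subsingleton _)
  · intro i A hA c
    simp only [MvPolynomial.eval_X]
    exact conj_00 k A hA c
  · intro P hP
    have hX0 : (MvPolynomial.X 0 : MvPolynomial (Fin k) ℂ)
        ∈ Algebra.adjoin ℂ (Set.range fun _ : Fin 1 => (MvPolynomial.X 0 : MvPolynomial (Fin k) ℂ)) :=
      Algebra.subset_adjoin ⟨0, rfl⟩
    set S := Algebra.adjoin ℂ (Set.range fun _ : Fin 1 => (MvPolynomial.X 0 : MvPolynomial (Fin k) ℂ)) with hS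
    -- invariance under scalings
    have hscale : ∀ (lam : ℂ), lam ≠ 0 → ∀ c : Fin k → ℂ,
        MvPolynomial.eval (fun s : Fin k => c s * lam ^ (s.val)) P = MvPolynomial.eval c P := by
      intro lam hl c
      have hmem : Mmat k (fun t : Fin k => if t = 0 then lam else 0) ∈ Gset k :=
        ⟨fun t => if t = 0 then lam else 0, by simpa using hl, rfl⟩
      have h := hP _ hmem c
      rw [show coordOf k ((Mmat k (fun t : Fin k => if t = 0 then lam else 0))⁻¹ * matOf k c *
            Mmat k (fun t : Fin k => if t = 0 then lam else 0))
          = fun s : Fin k => c s * lam ^ (s.val) from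
        funext fun s => by rw [scale_coord k lam hl c s]; ring] at h
      exact h
    -- the key consequence: eval only depends on c 0
    have key : ∀ c : Fin k → ℂ,
        MvPolynomial.eval (fun s : Fin k => if s = 0 then c 0 else 0) P
          = MvPolynomial.eval c P := by
      intro c
      set F : Polynomial ℂ :=
        MvPolynomial.aeval (fun s : Fin k => Polynomial.C (c s) * Polynomial.X ^ (s.val)) P with hF
      have hevF : ∀ lam : ℂ, Polynomial.eval lam F
          = MvPolynomial.eval (fun s : Fin k => c s * lam ^ (s.val)) P := by
        intro lam
        have h1 := MvPolynomial.comp_aeval_apply (R := ℂ)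
          (f := fun s : Fin k => Polynomial.C (c s) * Polynomial.X ^ (s.val))
          (Polynomial.aeval lam) P
        rw [hF]
        have h2 : (Polynomial.aeval lam : Polynomial ℂ →ₐ[ℂ] ℂ) F = Polynomial.eval lam F := by
          rw [← Polynomial.coe_aeval_eq_eval]
        rw [← h2, hF, h1]
        have h3 : (fun i : Fin k => (Polynomial.aeval lam) (Polynomial.C (c i) * Polynomial.X ^ (i.val)))
            = fun i : Fin k => c i * lam ^ (i.val) := by
          funext i
          simp
        rw [h3]
        rfl
      have hzero : F - Polynomial.C (MvPolynomial.eval c P) = 0 := by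
        apply Polynomial.eq_zero_of_infinite_isRoot
        apply Set.Infinite.mono (s := {x : ℂ | x ≠ 0})
        · intro x hx
          simp only [Set.mem_setOf_eq, Polynomial.IsRoot, Polynomial.eval_sub,
            Polynomial.eval_C, hevF x]
          rw [hscale x hx c]
          ring
        · have : ({0}ᶜ : Set ℂ).Infinite := (Set.finite_singleton 0).infinite_compl
          convert this using 1
          ext x; simp
      have hFC : F = Polynomial.C (MvPolynomial.eval c P) := by
        have := sub_eq_zero.mp hzero
        exact this
      have h0 := hevF 0
      rw [hFC] at h0
      simp only [Polynomial.eval_C] at h0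
      have h5 : (fun s : Fin k => if s = 0 then c 0 else 0)
          = fun s : Fin k => c s * (0 : ℂ) ^ (s.val) := by
        funext s
        by_cases hs : s = 0
        · subst hs
          simp
        · have hv : (s : ℕ) ≠ 0 := fun h => hs (Fin.ext h)
          rw [if_neg hs, zero_pow hv, mul_zero]
      rw [h5]
      exact h0.symm
    -- P = aeval g P with g s = if s = 0 then X 0 else 0
    set g : Fin k → MvPolynomial (Fin k) ℂ := fun s => if s = 0 then MvPolynomial.X 0 else 0 with hg
    have hQP : MvPolynomial.aeval g P = P := by
      apply MvPolynomial.funext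
      intro c
      have h1 : MvPolynomial.eval c (MvPolynomial.aeval g P)
          = MvPolynomial.aeval (fun s : Fin k => MvPolynomial.eval c (g s)) P := by
        have := MvPolynomial.comp_aeval_apply (R := ℂ) (f := g)
          (MvPolynomial.aeval c : MvPolynomial (Fin k) ℂ →ₐ[ℂ] ℂ) P
        have hae : ∀ Q : MvPolynomial (Fin k) ℂ,
            (MvPolynomial.aeval c : MvPolynomial (Fin k) ℂ →ₐ[ℂ] ℂ) Q = MvPolynomial.eval c Q :=
          fun Q => rfl
        rw [← hae, this]
        rfl
      rw [h1]
      have h2 : (fun s : Fin k => MvPolynomial.eval c (g s))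
          = fun s : Fin k => if s = 0 then c 0 else 0 := by
        funext s
        by_cases hs : s = 0 <;> simp [hg, hs]
      rw [h2]
      have h3 : MvPolynomial.aeval (fun s : Fin k => if s = 0 then c 0 else 0) P
          = MvPolynomial.eval (fun s : Fin k => if s = 0 then c 0 else 0) P := rfl
      rw [h3, key c]
    -- membership
    rw [← hQP]
    set g' : Fin k → S := fun s => if s = 0 then ⟨MvPolynomial.X 0, hX0⟩ else 0 with hg'
    have hgg : g = fun s : Fin k => (Subalgebra.val S) (g' s) := by
      funext s
      by_cases hs : s = 0 <;> simp [hg, hg', hs]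
    have h4 : MvPolynomial.aeval g P = (Subalgebra.val S) (MvPolynomial.aeval g' P) := by
      rw [MvPolynomial.comp_aeval_apply (R := ℂ) (f := g') (Subalgebra.val S) P, ← hgg]
    rw [h4]
    exact (MvPolynomial.aeval g' P).2
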